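/- Let G be a group and let J and K be proper subgroups of G, with x ∈ J \ Z(J), x ∉ K, y ∈ K \ Z(K), and y ∉ J. Set H := J ∩ K. Suppose that (H is a maximal subgroup of J, or K is a normal maximal subgroup of G), and that (H is a maximal subgroup of K, or J is a normal maximal subgroup of G). Then there exists g ∈ H such that [x,g] ≠ 1, [g,y] ≠ 1, ⟨x,g⟩ ≠ G and ⟨g,y⟩ ≠ G; that is, (x, g, y) is a path of length 2 in the non-commuting, non-generating graph nc(G). -/

import Mathlib

open Subgroup

namespace NC

variable {G : Type*} [Group G]

/-- The centre of a subgroup `H`, realised as a subgroup of the ambient group `G`. -/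
def centerOf (H : Subgroup G) : Subgroup G := H ⊓ Subgroup.centralizer (H : Set G)

/-- `H` is a maximal subgroup of `K` (both subgroups of the ambient group `G`). -/
def IsMaximalIn (H K : Subgroup G) : Prop :=
  H < K ∧ ∀ T : Subgroup G, H < T → T ≤ K → T = K

/-- The non-commuting, non-generating graph of `G`: vertices `x, y` are adjacent
iff they do not commute and do not generate `G`.  (Central elements are isolated
vertices here; the paper simply removes them from the vertex set.) -/
def ncGraph (G : Type*) [Group G] : SimpleGraph G where
  Adj x y := x * y ≠ y * x ∧ Subgroup.closure {x, y} ≠ ⊤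
  symm := by
    refine ⟨fun x y h => ?_⟩
    exact ⟨fun e => h.1 e.symm, by rw [Set.pair_comm]; exact h.2⟩
  loopless := by
    refine ⟨fun x h => ?_⟩
    exact h.1 rfl

/-- The conjugate `g H g⁻¹` of a subgroup `H` by an element `g`. -/
def conjSub (g : G) (H : Subgroup G) : Subgroup G := H.map (MulAut.conj g).toMonoidHom

/-- "The quotient of `G` by the subgroup `H` is cyclic": every coset of `H` is a
power of a fixed coset.  For `H` normal this says exactly that `G/H` is cyclic. -/
def QuotCyclic (H : Subgroup G) : Prop := ∃ g : G, ∀ x : G, ∃ n : ℤ, x⁻¹ * g ^ n ∈ H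

/-- `P` is a Sylow `p`-subgroup of `G`. -/
def IsSylowIn (p : ℕ) (P : Subgroup G) : Prop :=
  IsPGroup p P ∧ ∀ R : Subgroup G, IsPGroup p R → P ≤ R → R = P

/-- The Frattini subgroup of a subgroup `P` (the intersection of the maximal
subgroups of `P`), realised as a subgroup of the ambient group. -/
def phiIn (P : Subgroup G) : Subgroup G := P ⊓ sInf {W : Subgroup G | IsMaximalIn W P}

/-- `G` has exactly two conjugacy classes of maximal subgroups. -/
def TwoMaxClasses (G : Type*) [Group G] : Prop :=
  ∃ K L : Subgroup G, IsCoatom K ∧ IsCoatom L ∧ (∀ g : G, conjSub g K ≠ L) ∧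
    ∀ T : Subgroup G, IsCoatom T → (∃ g : G, T = conjSub g K) ∨ (∃ g : G, T = conjSub g L)

/-- The induced subgraph of the non-commuting, non-generating graph on the
actual vertex set `G \ Z(G)`. -/
def ncSubgraph (G : Type*) [Group G] := (ncGraph G).induce {x : G | x ∉ Subgroup.center G}

/-- Dedekind-style lemma: if `K` is a normal maximal subgroup and `J ≰ K`, then
`J ⊓ K` is a maximal subgroup of `J`. -/
lemma dedekind_max {J K : Subgroup G} (hn : K.Normal) (hc : IsCoatom K)
    (hJK : ¬ J ≤ K) : IsMaximalIn (J ⊓ K) J := by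
  haveI := hn
  constructor
  · refine lt_of_le_of_ne inf_le_left fun h => hJK ?_
    rw [← h]; exact inf_le_right
  · intro T hT hTJ
    have hTK : ¬ T ≤ K := fun h => absurd (le_inf hTJ h) (not_le_of_gt hT)
    obtain ⟨t, htT, htK⟩ := SetLike.not_le_iff_exists.1 hTK
    have hsup : K ⊔ T = ⊤ := by
      refine hc.2 _ (lt_of_le_of_ne le_sup_left fun h => htK ?_)
      exact h ▸ Subgroup.mem_sup_right htT
    refine le_antisymm hTJ fun j hj => ?_
    have hj' : j ∈ (↑(T ⊔ K) : Set G) := by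
      rw [sup_comm] at hsup
      rw [hsup]; trivial
    rw [Subgroup.mul_normal] at hj'
    obtain ⟨a, ha, b, hb, rfl⟩ := hj'
    have hbJ : b ∈ J := by
      have : (a : G)⁻¹ * (a * b) ∈ J := J.mul_mem (J.inv_mem (hTJ ha)) hj
      rwa [inv_mul_cancel_left] at this
    exact T.mul_mem ha (le_of_lt hT ⟨hbJ, hb⟩)

/-- If `x ∈ J \ K` centralizes `J ⊓ K`, which is maximal in `J`, then `x` is
central in `J`. -/
lemma central_of_centralizes {J K : Subgroup G} {x : G}
    (m : IsMaximalIn (J ⊓ K) J) (hxJ : x ∈ J) (hxK : x ∉ K)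
    (h : ∀ g ∈ J ⊓ K, x * g = g * x) : x ∈ centerOf J := by
  have hle : J ⊓ K ≤ J ⊓ Subgroup.centralizer {x} := by
    refine le_inf inf_le_left fun g hg => ?_
    rw [Subgroup.mem_centralizer_iff]
    intro h' hh'
    rw [Set.mem_singleton_iff] at hh'
    subst hh'
    exact h g hg
  have hxT : x ∈ J ⊓ Subgroup.centralizer {x} :=
    ⟨hxJ, Subgroup.mem_centralizer_iff.2 fun h' hh' => by
      rw [Set.mem_singleton_iff] at hh'; subst hh'; rfl⟩
  have hlt : J ⊓ K < J ⊓ Subgroup.centralizer {x} :=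
    lt_of_le_of_ne hle fun h' => hxK (by rw [← h'] at hxT; exact hxT.2)
  have hT : J ⊓ Subgroup.centralizer {x} = J := m.2 _ hlt inf_le_left
  refine ⟨hxJ, Subgroup.mem_centralizer_iff.2 fun g hg => ?_⟩
  have : g ∈ J ⊓ Subgroup.centralizer {x} := by rw [hT]; exact hg
  exact (Subgroup.mem_centralizer_iff.1 this.2 x rfl).symm

/-- Lemma 2.10(ii) / `lem:centremaxmax`. -/
theorem statement_5 {J K : Subgroup G} (hJ : J ≠ ⊤) (hK : K ≠ ⊤)
    {x y : G} (hxJ : x ∈ J) (hxZ : x ∉ centerOf J) (hxK : x ∉ K)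
    (hyK : y ∈ K) (hyZ : y ∉ centerOf K) (hyJ : y ∉ J)
    (h1 : IsMaximalIn (J ⊓ K) J ∨ (K.Normal ∧ IsCoatom K))
    (h2 : IsMaximalIn (J ⊓ K) K ∨ (J.Normal ∧ IsCoatom J)) :
    ∃ g ∈ J ⊓ K, (ncGraph G).Adj x g ∧ (ncGraph G).Adj g y := by
  have hJK : ¬ J ≤ K := fun h => hxK (h hxJ)
  have hKJ : ¬ K ≤ J := fun h => hyJ (h hyK)
  have m1 : IsMaximalIn (J ⊓ K) J := h1.elim id fun ⟨hn, hc⟩ => dedekind_max hn hc hJK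
  have m2 : IsMaximalIn (J ⊓ K) K := by
    refine h2.elim (by rw [inf_comm]; exact id) fun ⟨hn, hc⟩ => ?_
    rw [inf_comm]
    exact dedekind_max hn hc hKJ
  rw [inf_comm] at m2
  have key : ∃ g ∈ J ⊓ K, x * g ≠ g * x ∧ g * y ≠ y * g := by
    by_contra hcon
    push_neg at hcon
    by_cases hall : ∀ g ∈ J ⊓ K, x * g = g * x
    · exact hxZ (central_of_centralizes m1 hxJ hxK hall)
    · push_neg at hall
      obtain ⟨b, hb, hbx⟩ := hall
      have hby : b * y = y * b := hcon b hb hbx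
      have hally : ∀ g ∈ J ⊓ K, y * g = g * y := by
        intro a ha
        by_cases hay : a * y = y * a
        · exact hay.symm
        · have hax : x * a = a * x := by
            by_contra hax
            exact hay (hcon a ha hax)
          exfalso
          have hab : a * b ∈ J ⊓ K := Subgroup.mul_mem _ ha hb
          by_cases habx : x * (a * b) = (a * b) * x
          · apply hbx
            have : a * (x * b) = a * (b * x) := by
              rw [← mul_assoc, ← hax, mul_assoc, habx, mul_assoc]
            exact mul_left_cancel this
          · have haby : (a * b) * y = y * (a * b) := hcon _ hab habx
            apply hay
            have : (a * y) * b = (y * a) * b := by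
              rw [mul_assoc, ← hby, ← mul_assoc, haby, mul_assoc]
            exact mul_right_cancel this
      have : y ∈ centerOf K := by
        refine central_of_centralizes m2 hyK hyJ ?_
        intro g hg
        exact hally g ⟨hg.2, hg.1⟩
      exact hyZ this
  obtain ⟨g, hg, hxg, hgy⟩ := key
  refine ⟨g, hg, ⟨hxg, fun ht => hJ ?_⟩, ⟨hgy, fun ht => hK ?_⟩⟩
  · have : Subgroup.closure {x, g} ≤ J := by
      rw [Subgroup.closure_le]
      rintro z (rfl | rfl)
      exacts [hxJ, hg.1]
    rw [ht] at this
    exact top_le_iff.1 this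
  · have : Subgroup.closure {g, y} ≤ K := by
      rw [Subgroup.closure_le]
      rintro z (rfl | rfl)
      exacts [hg.2, hyK]
    rw [ht] at this
    exact top_le_iff.1 this

end NC
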